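/- Define β(m) = 2^{√(log m · log log m)} and suppose V: N → R≥0 satisfies V(m) ≤ C₅ log(m)β(m)m + C₆ log(m)β(m)·V(m/β(m)) for all m above a constant, with V bounded on a constant-size base case. Then V(m) ≤ C·m·2^{5√(log m · log log m)} for some constant C (for all sufficiently large m). -/

import Mathlib

set_option maxHeartbeats 1000000

private lemma aux_log (x y u : ℝ) (h1 : y ≤ 2*x) (h2 : 4 ≤ x)
    (h3 : (0.6931471803:ℝ) < u) : y ≤ x*x*u := by nlinarith

private lemma aux_ab (a b c : ℝ) (hb0 : 0 ≤ b) (hba : b ≤ a) (ha : 4 ≤ a)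
    (hc : 0 ≤ c) (hp : (a-b)*(a+b) = a*c) : c/2 ≤ a - b := by nlinarith

private lemma aux_bc (a b c : ℝ) (hc0 : 0 ≤ c) (h : c/2 ≤ a - b) :
    b*c ≤ a*c - c*c/2 := by nlinarith

private lemma aux_comb (C y P : ℝ) (hy : 0 ≤ y) (hP : 0 ≤ P) :
    ((C-1)/2)*y*P + (C/2)*y*P ≤ C*y*P := by nlinarith [mul_nonneg hy hP]


/-- solving the recurrence
`V(m) ≤ C₅·log(m)·β(m)·m + C₆·log(m)·β(m)·V(m/β(m))` with
`β(m) = 2^{√(log m · log log m)}` (logs base 2, base case bounded) yields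
`V(m) ≤ C·m·2^{5√(log m · log log m)}` for all sufficiently large `m`. -/
theorem stmt_19 (C₅ C₆ Bd : ℝ) (hC₅ : 0 ≤ C₅) (hC₆ : 0 ≤ C₆) (m₀ : ℕ)
    (β : ℕ → ℝ)
    (hβ : ∀ m : ℕ, β m =
      (2 : ℝ) ^ Real.sqrt (Real.logb 2 m * Real.logb 2 (Real.logb 2 m)))
    (V : ℕ → ℝ) (hV0 : ∀ m, 0 ≤ V m) (hbase : ∀ m < m₀, V m ≤ Bd)
    (hrec : ∀ m : ℕ, m₀ ≤ m →
      V m ≤ C₅ * Real.logb 2 m * β m * m +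
        C₆ * Real.logb 2 m * β m * V (Nat.floor ((m : ℝ) / β m))) :
    ∃ (C : ℝ) (M : ℕ), 0 < C ∧ ∀ m : ℕ, M ≤ m →
      V m ≤ C * m *
        (2 : ℝ) ^ (5 * Real.sqrt (Real.logb 2 m * Real.logb 2 (Real.logb 2 m))) := by
  classical
  set s : ℕ → ℝ := fun m => Real.sqrt (Real.logb 2 m * Real.logb 2 (Real.logb 2 m))
    with hs
  have one_lt_two' : (1:ℝ) < 2 := one_lt_two
  set K : ℝ := max 4 ((2/3)*(1 + Real.logb 2 (C₆+1))) with hKdef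
  have hK4 : (4:ℝ) ≤ K := le_max_left _ _
  have hKC : (2/3)*(1 + Real.logb 2 (C₆+1)) ≤ K := le_max_right _ _
  set M : ℕ := max (max m₀ 2) (⌈(2:ℝ) ^ ((2:ℝ)^K)⌉₊ + 1) with hMdef
  set C : ℝ := 1 + 2*C₅ + ∑ i ∈ Finset.range M, V i with hCdef
  have hSnn : 0 ≤ ∑ i ∈ Finset.range M, V i :=
    Finset.sum_nonneg fun i _ => hV0 i
  have hC1 : 1 ≤ C := by rw [hCdef]; linarith
  have hCpos : 0 < C := lt_of_lt_of_le one_pos hC1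
  refine ⟨C, M, hCpos, ?_⟩
  have hM2 : 2 ≤ M := le_trans (le_max_right m₀ 2) (le_max_left _ _)
  -- main claim, by strong induction
  have key : ∀ m : ℕ, 1 ≤ m → V m ≤ C * m * (2:ℝ)^(5 * s m) := by
    intro m
    induction m using Nat.strong_induction_on with
    | _ m ih =>
      intro hm1
      have hsnn : 0 ≤ s m := Real.sqrt_nonneg _
      have hpow1 : (1:ℝ) ≤ (2:ℝ)^(5 * s m) := by
        have := Real.rpow_le_rpow_of_exponent_le one_le_two
          (by positivity : (0:ℝ) ≤ 5 * s m)
        simpa [Real.rpow_zero] using this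
      have hmR1 : (1:ℝ) ≤ (m:ℝ) := by exact_mod_cast hm1
      by_cases hmM : m < M
      · -- base case: m < M
        have hVC : V m ≤ C := by
          have h1 : V m ≤ ∑ i ∈ Finset.range M, V i :=
            Finset.single_le_sum (f := V) (fun i _ => hV0 i)
              (Finset.mem_range.mpr hmM)
          rw [hCdef]; linarith
        calc V m ≤ C := hVC
          _ = C * 1 * 1 := by ring
          _ ≤ C * m * (2:ℝ)^(5 * s m) := by
              apply mul_le_mul
              · exact mul_le_mul_of_nonneg_left hmR1 (le_of_lt hCpos)
              · exact hpow1
              · norm_num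
              · positivity
      · -- inductive step: m ≥ M
        push_neg at hmM
        have hm0 : m₀ ≤ m := le_trans (le_trans (le_max_left m₀ 2) (le_max_left _ _)) hmM
        have hmRpos : (0:ℝ) < m := by exact_mod_cast lt_of_lt_of_le Nat.zero_lt_one hm1
        set L : ℝ := Real.logb 2 m with hLdef
        set l : ℝ := Real.logb 2 L with hldef
        -- m ≥ 2^(2^K), hence L ≥ 2^K and l ≥ K
        have hxm : (2:ℝ) ^ ((2:ℝ)^K) ≤ (m:ℝ) := by
          have h1 : ⌈(2:ℝ)^((2:ℝ)^K)⌉₊ + 1 ≤ m := le_trans (le_max_right _ _) hmM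
          have h2 := Nat.le_ceil ((2:ℝ)^((2:ℝ)^K))
          have h3 : (⌈(2:ℝ)^((2:ℝ)^K)⌉₊ : ℝ) ≤ (m:ℝ) := by
            exact_mod_cast le_trans (Nat.le_succ _) h1
          linarith
        have hL2K : (2:ℝ)^K ≤ L := by
          have := Real.logb_le_logb_of_le one_lt_two'
            (Real.rpow_pos_of_pos two_pos _) hxm
          rwa [Real.logb_rpow two_pos (by norm_num)] at this
        have hL16 : (16:ℝ) ≤ L := by
          have h16 : (16:ℝ) = (2:ℝ)^(4:ℝ) := by
            rw [show (4:ℝ) = ((4:ℕ):ℝ) by norm_num, Real.rpow_natCast]; norm_num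
          rw [h16]
          exact le_trans (Real.rpow_le_rpow_of_exponent_le one_le_two hK4) hL2K
        have hLpos : (0:ℝ) < L := by linarith
        have hlK : K ≤ l := by
          have := Real.logb_le_logb_of_le one_lt_two'
            (Real.rpow_pos_of_pos two_pos K) hL2K
          rwa [Real.logb_rpow two_pos (by norm_num)] at this
        have hl4 : (4:ℝ) ≤ l := le_trans hK4 hlK
        have hlpos : (0:ℝ) < l := by linarith
        have hsqL4 : (4:ℝ) ≤ Real.sqrt L := by
          have h := Real.sqrt_le_sqrt hL16
          rwa [show (16:ℝ) = 4^2 by norm_num,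
            Real.sqrt_sq (by norm_num : (0:ℝ) ≤ 4)] at h
        have hsqLm : Real.sqrt L * Real.sqrt L = L := Real.mul_self_sqrt (le_of_lt hLpos)
        -- l ≤ L
        have hlL : l ≤ L := by
          have hsL : Real.log (Real.sqrt L) ≤ Real.sqrt L - 1 :=
            Real.log_le_sub_one_of_pos (Real.sqrt_pos.mpr hLpos)
          have hls : Real.log (Real.sqrt L) = Real.log L / 2 :=
            Real.log_sqrt (le_of_lt hLpos)
          have hlogL : Real.log L ≤ 2 * Real.sqrt L := by
            rw [hls] at hsL; linarith
          have hlog2 := Real.log_two_gt_d9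
          have hleq : l = Real.log L / Real.log 2 := rfl
          rw [hleq, div_le_iff₀ (by linarith : (0:ℝ) < Real.log 2)]
          have h := aux_log (Real.sqrt L) (Real.log L) (Real.log 2) hlogL hsqL4 hlog2
          rw [hsqLm] at h
          exact h
        -- basic facts about s m
        have hsm : s m = Real.sqrt (L * l) := rfl
        have hsmL : s m ≤ L := by
          rw [hsm]
          calc Real.sqrt (L * l) ≤ Real.sqrt (L * L) :=
              Real.sqrt_le_sqrt (mul_le_mul_of_nonneg_left hlL (le_of_lt hLpos))
            _ = L := Real.sqrt_mul_self (le_of_lt hLpos)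
        have hlsm : l ≤ s m := by
          rw [hsm]
          calc l = Real.sqrt (l * l) := (Real.sqrt_mul_self (le_of_lt hlpos)).symm
            _ ≤ Real.sqrt (L * l) := Real.sqrt_le_sqrt (mul_le_mul_of_nonneg_right hlL (le_of_lt hlpos))
        have hsm1 : (1:ℝ) ≤ s m := by linarith
        have hβm : β m = (2:ℝ)^(s m) := hβ m
        have hβpos : (0:ℝ) < β m := by rw [hβm]; positivity
        have hβ2 : (2:ℝ) ≤ β m := by
          rw [hβm]
          calc (2:ℝ) = (2:ℝ)^(1:ℝ) := (Real.rpow_one 2).symm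
            _ ≤ (2:ℝ)^(s m) := Real.rpow_le_rpow_of_exponent_le one_le_two hsm1
        have hβlem : β m ≤ (m:ℝ) := by
          rw [hβm]
          calc (2:ℝ)^(s m) ≤ (2:ℝ)^L := Real.rpow_le_rpow_of_exponent_le one_le_two hsmL
            _ = m := Real.rpow_logb two_pos (by norm_num) hmRpos
        -- m' = floor(m / β m)
        set m' : ℕ := Nat.floor ((m:ℝ) / β m) with hm'def
        have hdiv1 : (1:ℝ) ≤ (m:ℝ) / β m := by
          rw [le_div_iff₀ hβpos, one_mul]; exact hβlem
        have hm'1 : 1 ≤ m' := Nat.le_floor (by exact_mod_cast hdiv1)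
        have hm'lt : m' < m := by
          have h : (m:ℝ) / β m < (m:ℝ) := by
            rw [div_lt_iff₀ hβpos]
            have h2 := mul_le_mul_of_nonneg_left hβ2 (le_of_lt hmRpos)
            linarith
          exact (Nat.floor_lt (by positivity)).mpr h
        have hm'le : (m':ℝ) ≤ (m:ℝ) / β m := Nat.floor_le (by positivity)
        have hm'pos : (0:ℝ) < (m':ℝ) := by exact_mod_cast hm'1
        -- bound s m' ≤ s m - l/2
        set L' : ℝ := Real.logb 2 m' with hL'def
        have hL'0 : 0 ≤ L' := Real.logb_nonneg one_lt_two' (by exact_mod_cast hm'1)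
        have hL'le : L' ≤ L - s m := by
          have h1 : L' ≤ Real.logb 2 ((m:ℝ)/β m) :=
            Real.logb_le_logb_of_le one_lt_two' hm'pos hm'le
          have h2 : Real.logb 2 ((m:ℝ)/β m) = L - s m := by
            rw [Real.logb_div (ne_of_gt hmRpos) (ne_of_gt hβpos), hβm,
              Real.logb_rpow two_pos (by norm_num)]
          linarith
        have hLs0 : 0 ≤ L - s m := le_trans hL'0 hL'le
        have hsm'eq : s m' = Real.sqrt (L' * Real.logb 2 L') := rfl
        have hsm'le : s m' ≤ s m - l/2 := by
          have hstep1 : s m' ≤ Real.sqrt ((L - s m) * l) := by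
            rw [hsm'eq]
            rcases le_or_gt (L' * Real.logb 2 L') 0 with hneg | hposp
            · rw [Real.sqrt_eq_zero'.mpr hneg]; positivity
            · have hL'pos : 0 < L' := by
                rcases eq_or_lt_of_le hL'0 with h | h
                · exfalso; rw [← h] at hposp; simpa using hposp
                · exact h
              have hl'pos : 0 < Real.logb 2 L' := by
                rcases mul_pos_iff.mp hposp with ⟨_, h⟩ | ⟨h, _⟩
                · exact h
                · linarith
              have hl'le : Real.logb 2 L' ≤ l :=
                Real.logb_le_logb_of_le one_lt_two' hL'pos (by linarith)
              exact Real.sqrt_le_sqrt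
                (mul_le_mul hL'le hl'le (le_of_lt hl'pos) hLs0)
          have hstep2 : Real.sqrt ((L - s m) * l) ≤ s m - l/2 := by
            set a := Real.sqrt L with ha
            set b := Real.sqrt (L - s m) with hb
            set c := Real.sqrt l with hc
            have hbb : b * b = L - s m := Real.mul_self_sqrt hLs0
            have hcc : c * c = l := Real.mul_self_sqrt (le_of_lt hlpos)
            have hb0 : 0 ≤ b := Real.sqrt_nonneg _
            have hc0 : 0 ≤ c := Real.sqrt_nonneg _
            have hsmac : s m = a * c := by
              rw [hsm, Real.sqrt_mul (le_of_lt hLpos)]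
            have hba : b ≤ a := Real.sqrt_le_sqrt (by linarith)
            have heq : Real.sqrt ((L - s m) * l) = b * c := by
              rw [Real.sqrt_mul hLs0]
            have hprod : (a - b) * (a + b) = a * c := by
              have haa : a * a = L := hsqLm
              rw [hsmac] at hbb
              linear_combination haa - hbb
            have hab2 : c / 2 ≤ a - b :=
              aux_ab a b c hb0 hba hsqL4 hc0 hprod
            rw [heq, hsmac]
            have h6 := aux_bc a b c hc0 hab2
            rw [hcc] at h6
            exact h6
          linarith
        -- the rpow identities
        have h2l : (2:ℝ)^l = L := Real.rpow_logb two_pos (by norm_num) hLpos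
        have hC₆L : C₆ * L ≤ (2:ℝ)^(5*l/2 - 1) := by
          have hq : Real.logb 2 (C₆+1) ≤ 3*l/2 - 1 := by
            have := le_trans hKC hlK; linarith
          have h1 : C₆ + 1 = (2:ℝ)^(Real.logb 2 (C₆+1)) :=
            (Real.rpow_logb two_pos (by norm_num) (by linarith)).symm
          have h2 : C₆ ≤ (2:ℝ)^(3*l/2 - 1) := by
            calc C₆ ≤ C₆ + 1 := by linarith
              _ = (2:ℝ)^(Real.logb 2 (C₆+1)) := h1
              _ ≤ (2:ℝ)^(3*l/2 - 1) := Real.rpow_le_rpow_of_exponent_le one_le_two hq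
          calc C₆ * L = C₆ * (2:ℝ)^l := by rw [h2l]
            _ ≤ (2:ℝ)^(3*l/2 - 1) * (2:ℝ)^l := by
                apply mul_le_mul_of_nonneg_right h2 (by positivity)
            _ = (2:ℝ)^(5*l/2 - 1) := by
                rw [← Real.rpow_add two_pos]; ring_nf
        -- bound V m' via the induction hypothesis
        have ihm' : V m' ≤ C * m' * (2:ℝ)^(5 * s m') := ih m' hm'lt hm'1
        have hQle : (2:ℝ)^(5 * s m') ≤ (2:ℝ)^(5 * s m - 5*l/2) :=
          Real.rpow_le_rpow_of_exponent_le one_le_two (by linarith)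
        have hVm' : V m' ≤ C * ((m:ℝ)/β m) * (2:ℝ)^(5 * s m - 5*l/2) := by
          calc V m' ≤ C * m' * (2:ℝ)^(5 * s m') := ihm'
            _ ≤ C * ((m:ℝ)/β m) * (2:ℝ)^(5 * s m - 5*l/2) := by
                apply mul_le_mul
                · exact mul_le_mul_of_nonneg_left hm'le (le_of_lt hCpos)
                · exact hQle
                · positivity
                · positivity
        -- the recurrence
        have hrecm := hrec m hm0
        -- bound term 1
        have ht1 : C₅ * L * β m * m ≤ ((C-1)/2) * m * (2:ℝ)^(5 * s m) := by
          have e1 : L * β m = (2:ℝ)^(l + s m) := by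
            rw [hβm, ← h2l, ← Real.rpow_add two_pos]
          have e2 : (2:ℝ)^(l + s m) ≤ (2:ℝ)^(5 * s m) :=
            Real.rpow_le_rpow_of_exponent_le one_le_two (by linarith)
          have hC₅le : C₅ ≤ (C-1)/2 := by rw [hCdef]; linarith
          calc C₅ * L * β m * m = C₅ * (L * β m) * m := by ring
            _ = C₅ * (2:ℝ)^(l + s m) * m := by rw [e1]
            _ ≤ ((C-1)/2) * (2:ℝ)^(5 * s m) * m := by
                apply mul_le_mul_of_nonneg_right _ (le_of_lt hmRpos)
                apply mul_le_mul hC₅le e2 (by positivity) (by linarith)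
            _ = ((C-1)/2) * m * (2:ℝ)^(5 * s m) := by ring
        -- bound term 2
        have ht2 : C₆ * L * β m * V m' ≤ (C/2) * m * (2:ℝ)^(5 * s m) := by
          have step1 : C₆ * L * β m * V m' ≤
              C₆ * L * β m * (C * ((m:ℝ)/β m) * (2:ℝ)^(5 * s m - 5*l/2)) := by
            apply mul_le_mul_of_nonneg_left hVm'
            have : 0 ≤ L := le_of_lt hLpos
            positivity
          have step2 : C₆ * L * β m * (C * ((m:ℝ)/β m) * (2:ℝ)^(5 * s m - 5*l/2)) =
              (C₆ * L) * (C * m * (2:ℝ)^(5 * s m - 5*l/2)) := by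
            field_simp
          have step3 : (C₆ * L) * (C * m * (2:ℝ)^(5 * s m - 5*l/2)) ≤
              (2:ℝ)^(5*l/2 - 1) * (C * m * (2:ℝ)^(5 * s m - 5*l/2)) := by
            apply mul_le_mul_of_nonneg_right hC₆L (by positivity)
          have step4 : (2:ℝ)^(5*l/2 - 1) * (C * m * (2:ℝ)^(5 * s m - 5*l/2)) =
              (C/2) * m * (2:ℝ)^(5 * s m) := by
            have e : (2:ℝ)^(5*l/2 - 1) * (2:ℝ)^(5 * s m - 5*l/2) =
                (2:ℝ)^(5 * s m) / 2 := by
              rw [← Real.rpow_add two_pos]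
              rw [show 5*l/2 - 1 + (5 * s m - 5*l/2) = 5 * s m - 1 by ring]
              rw [Real.rpow_sub two_pos, Real.rpow_one]
            calc (2:ℝ)^(5*l/2 - 1) * (C * m * (2:ℝ)^(5 * s m - 5*l/2)) =
                C * m * ((2:ℝ)^(5*l/2 - 1) * (2:ℝ)^(5 * s m - 5*l/2)) := by ring
              _ = C * m * ((2:ℝ)^(5 * s m) / 2) := by rw [e]
              _ = (C/2) * m * (2:ℝ)^(5 * s m) := by ring
          calc C₆ * L * β m * V m' ≤ _ := step1
            _ = _ := step2
            _ ≤ _ := step3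
            _ = (C/2) * m * (2:ℝ)^(5 * s m) := step4
        -- combine
        have hfin : C₅ * L * β m * m + C₆ * L * β m * V m' ≤ C * m * (2:ℝ)^(5 * s m) := by
          have hcomb := aux_comb C (m:ℝ) ((2:ℝ)^(5 * s m))
            (le_of_lt hmRpos) (by positivity)
          exact le_trans (add_le_add ht1 ht2) hcomb
        rw [← hLdef, ← hm'def] at hrecm
        exact le_trans hrecm hfin
  intro m hm
  exact key m (le_trans (le_trans (by norm_num) hM2) hm)
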